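/- Theorem 9 (linear growth for canonical converting): let G be a finite digraph and j a natural number such that for every i < j every vertex of L^i(G) has indegree ≥ 1, outdegree ≥ 1, and is simple. Then, in ℤ, |V(L^j(G))| = |V(G)| + j·(ν(G) − 1); i.e., the number of vertices of the iterated line digraphs depends linearly on the number of converting steps, with slope determined by the structure of the initial graph alone. -/

import Mathlib

universe u

/-- The line digraph of a digraph `G`: vertices are the edges of `G`. -/
def lineDigraph {V : Type u} (G : Digraph V) : Digraph {e : V × V // G.Adj e.1 e.2} where
  Adj e f := e.1.2 = f.1.1

instance {V : Type u} (G : Digraph V) [Fintype V] [DecidableRel G.Adj] :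
    Fintype {e : V × V // G.Adj e.1 e.2} :=
  Subtype.fintype _

instance {V : Type u} (G : Digraph V) [DecidableEq V] :
    DecidableRel (lineDigraph G).Adj :=
  fun e f => inferInstanceAs (Decidable (e.1.2 = f.1.1))

/-- The finset of (directed) edges of `G`. -/
def edgeFinset {V : Type u} (G : Digraph V) [Fintype V] [DecidableRel G.Adj] :
    Finset (V × V) :=
  Finset.univ.filter (fun p => G.Adj p.1 p.2)

/-- The indegree of a vertex. -/
def indeg {V : Type u} (G : Digraph V) [Fintype V] [DecidableRel G.Adj] (v : V) : ℕ :=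
  (Finset.univ.filter (fun u => G.Adj u v)).card

/-- The outdegree of a vertex. -/
def outdeg {V : Type u} (G : Digraph V) [Fintype V] [DecidableRel G.Adj] (v : V) : ℕ :=
  (Finset.univ.filter (fun w => G.Adj v w)).card

/-- The cyclomatic number `ν(G) = |E| - |V| + 1`, as an integer. -/
def cyclomatic {V : Type u} (G : Digraph V) [Fintype V] [DecidableRel G.Adj] : ℤ :=
  ((edgeFinset G).card : ℤ) - (Fintype.card V : ℤ) + 1

/-- A directed walk of length `k` in `G`. -/
def IsWalk {V : Type u} (G : Digraph V) {k : ℕ} (w : Fin (k + 1) → V) : Prop :=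
  ∀ i : Fin k, G.Adj (w i.castSucc) (w i.succ)

instance {V : Type u} (G : Digraph V) [DecidableRel G.Adj] {k : ℕ} :
    DecidablePred (IsWalk G (k := k)) :=
  fun w => inferInstanceAs (Decidable (∀ i : Fin k, G.Adj (w i.castSucc) (w i.succ)))

/-- A bundled finite digraph. -/
structure FinDigraph where
  V : Type
  [fin : Fintype V]
  [deq : DecidableEq V]
  G : Digraph V
  [dec : DecidableRel G.Adj]

attribute [instance] FinDigraph.fin FinDigraph.deq FinDigraph.dec

/-- One straight-converting step: the bundled line digraph. -/
def FinDigraph.line (H : FinDigraph) : FinDigraph where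
  V := {e : H.V × H.V // H.G.Adj e.1 e.2}
  G := lineDigraph H.G

/-- The `j`-fold iterated line digraph. -/
def FinDigraph.iterLine (H : FinDigraph) : ℕ → FinDigraph
  | 0 => H
  | j + 1 => (H.iterLine j).line

/-- Canonical: every vertex simple. -/
def FinDigraph.Canonical (H : FinDigraph) : Prop :=
  ∀ v : H.V, indeg H.G v ≤ 1 ∨ outdeg H.G v ≤ 1

/-- Contains a complicated vertex. -/
def FinDigraph.HasComplicated (H : FinDigraph) : Prop :=
  ∃ v : H.V, 2 ≤ indeg H.G v ∧ 2 ≤ outdeg H.G v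

/-- An `l₃₁`-interval of length `ℓ`. -/
def IsL31 {V : Type u} (G : Digraph V) [Fintype V] [DecidableRel G.Adj] {ℓ : ℕ}
    (w : Fin (ℓ + 1) → V) : Prop :=
  IsWalk G w ∧ 2 ≤ indeg G (w 0) ∧ 2 ≤ outdeg G (w (Fin.last ℓ)) ∧
    ∀ i : Fin (ℓ + 1), 0 < (i : ℕ) → (i : ℕ) < ℓ →
      indeg G (w i) = 1 ∧ outdeg G (w i) = 1

/-- A directed cycle of length `k`. -/
def IsCycle {V : Type u} (G : Digraph V) {k : ℕ} (w : Fin (k + 1) → V) : Prop :=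
  IsWalk G w ∧ w 0 = w (Fin.last k) ∧
    ∀ i j : Fin (k + 1), (i : ℕ) < k → (j : ℕ) < k → w i = w j → i = j

/-- `G` has a contour: a directed cycle with both an entry edge and an exit edge. -/
def HasContour {V : Type u} (G : Digraph V) : Prop :=
  ∃ (k : ℕ) (w : Fin (k + 2) → V), IsCycle G (k := k + 1) w ∧
    (∃ a b : V, G.Adj a b ∧ (∃ i, w i = b) ∧
      ¬ ∃ i : Fin (k + 1), w i.castSucc = a ∧ w i.succ = b) ∧
    (∃ a b : V, G.Adj a b ∧ (∃ i, w i = a) ∧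
      ¬ ∃ i : Fin (k + 1), w i.castSucc = a ∧ w i.succ = b)

section MyAux

variable {V : Type u} (G : Digraph V) [Fintype V] [DecidableEq V] [DecidableRel G.Adj]

lemma my_card_edge_eq :
    (edgeFinset G).card = Fintype.card {e : V × V // G.Adj e.1 e.2} := by
  rw [Fintype.card_subtype]
  rfl

lemma my_sum_outdeg : ∑ v, outdeg G v = (edgeFinset G).card := by
  rw [my_card_edge_eq, Fintype.card_congr
    (Equiv.subtypeProdEquivSigmaSubtype (fun a b => G.Adj a b)),
    Fintype.card_sigma]
  refine Finset.sum_congr rfl fun v _ => ?_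
  rw [Fintype.card_subtype]
  rfl

lemma my_sum_indeg : ∑ v, indeg G v = (edgeFinset G).card := by
  have e1 : {x : V × V // G.Adj x.1 x.2} ≃ {y : V × V // G.Adj y.2 y.1} :=
    (Equiv.prodComm V V).subtypeEquiv (fun x => by simp [Equiv.prodComm])
  rw [my_card_edge_eq, Fintype.card_congr
    (e1.trans (Equiv.subtypeProdEquivSigmaSubtype (fun a b => G.Adj b a))),
    Fintype.card_sigma]
  refine Finset.sum_congr rfl fun v _ => ?_
  rw [Fintype.card_subtype]
  rfl

/-- Edges of the line digraph correspond to pairs (in-edge, out-edge) at a vertex. -/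
def myLineEdgeEquiv :
    {q : {e : V × V // G.Adj e.1 e.2} × {e : V × V // G.Adj e.1 e.2} //
        (lineDigraph G).Adj q.1 q.2} ≃
      Σ v : V, {u : V // G.Adj u v} × {w : V // G.Adj v w} where
  toFun q := ⟨q.1.1.1.2, ⟨q.1.1.1.1, q.1.1.2⟩, ⟨q.1.2.1.2, by
      have h : q.1.1.1.2 = q.1.2.1.1 := q.2
      rw [h]; exact q.1.2.2⟩⟩
  invFun s := ⟨(⟨(s.2.1.1, s.1), s.2.1.2⟩, ⟨(s.1, s.2.2.1), s.2.2.2⟩), rfl⟩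
  left_inv := by
    rintro ⟨⟨⟨⟨a, b⟩, hab⟩, ⟨⟨c, d⟩, hcd⟩⟩, h⟩
    have hbc : b = c := h
    subst hbc
    rfl
  right_inv := by
    rintro ⟨v, ⟨u, hu⟩, ⟨w, hw⟩⟩
    rfl

lemma my_card_lineEdge :
    (edgeFinset (lineDigraph G)).card = ∑ v, indeg G v * outdeg G v := by
  rw [my_card_edge_eq, Fintype.card_congr (myLineEdgeEquiv G), Fintype.card_sigma]
  refine Finset.sum_congr rfl fun v _ => ?_
  rw [Fintype.card_prod, Fintype.card_subtype, Fintype.card_subtype]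
  rfl

end MyAux

lemma my_step (H : FinDigraph)
    (hH : ∀ v : H.V, 1 ≤ indeg H.G v ∧ 1 ≤ outdeg H.G v ∧
      (indeg H.G v ≤ 1 ∨ outdeg H.G v ≤ 1)) :
    (Fintype.card H.line.V : ℤ) = Fintype.card H.V + (cyclomatic H.G - 1) ∧
      cyclomatic H.line.G = cyclomatic H.G := by
  have hcardV : Fintype.card H.line.V = (edgeFinset H.G).card :=
    (my_card_edge_eq H.G).symm
  have hpt : ∀ v : H.V, indeg H.G v * outdeg H.G v + 1 = indeg H.G v + outdeg H.G v := by
    intro v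
    obtain ⟨h1, h2, h3⟩ := hH v
    rcases h3 with h3 | h3
    · have : indeg H.G v = 1 := le_antisymm h3 h1
      rw [this]; ring
    · have : outdeg H.G v = 1 := le_antisymm h3 h2
      rw [this]; ring
  have hsum : (∑ v, indeg H.G v * outdeg H.G v) + Fintype.card H.V =
      2 * (edgeFinset H.G).card := by
    have : (∑ v, (indeg H.G v * outdeg H.G v + 1)) =
        ∑ v, (indeg H.G v + outdeg H.G v) := Finset.sum_congr rfl fun v _ => hpt v
    rw [Finset.sum_add_distrib, Finset.sum_const, Finset.sum_add_distrib,
      my_sum_indeg, my_sum_outdeg] at this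
    simpa [Finset.card_univ, two_mul] using this
  have hE : (edgeFinset H.line.G).card = ∑ v, indeg H.G v * outdeg H.G v :=
    my_card_lineEdge H.G
  unfold cyclomatic
  rw [hcardV, hE]
  have hz : ((∑ v, indeg H.G v * outdeg H.G v : ℕ) : ℤ) + (Fintype.card H.V : ℤ) =
      2 * ((edgeFinset H.G).card : ℤ) := by exact_mod_cast hsum
  constructor
  · ring
  · linarith

theorem my_iterLine_aux (H : FinDigraph) (j : ℕ)
    (h : ∀ i < j, ∀ v : (H.iterLine i).V,
      1 ≤ indeg (H.iterLine i).G v ∧ 1 ≤ outdeg (H.iterLine i).G v ∧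
        (indeg (H.iterLine i).G v ≤ 1 ∨ outdeg (H.iterLine i).G v ≤ 1)) :
    (Fintype.card (H.iterLine j).V : ℤ) =
      (Fintype.card H.V : ℤ) + (j : ℤ) * (cyclomatic H.G - 1) ∧
      cyclomatic (H.iterLine j).G = cyclomatic H.G := by
  induction j with
  | zero => simp [FinDigraph.iterLine]; exact ⟨rfl, rfl⟩
  | succ j ih =>
    obtain ⟨ih1, ih2⟩ := ih (fun i hi => h i (Nat.lt_succ_of_lt hi))
    obtain ⟨s1, s2⟩ := my_step (H.iterLine j) (h j (Nat.lt_succ_self j))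
    constructor
    · show (Fintype.card (H.iterLine j).line.V : ℤ) = _
      rw [s1, ih1, ih2]
      push_cast
      ring
    · show cyclomatic (H.iterLine j).line.G = _
      rw [s2, ih2]

/-- Theorem 9: if for every `i < j` every vertex of `L^i(G)` has
indegree ≥ 1, outdegree ≥ 1 and is simple, then
`|V(L^j(G))| = |V(G)| + j * (ν(G) - 1)` in `ℤ`. -/
theorem iterLine_card_linear (H : FinDigraph) (j : ℕ)
    (h : ∀ i < j, ∀ v : (H.iterLine i).V,
      1 ≤ indeg (H.iterLine i).G v ∧ 1 ≤ outdeg (H.iterLine i).G v ∧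
        (indeg (H.iterLine i).G v ≤ 1 ∨ outdeg (H.iterLine i).G v ≤ 1)) :
    (Fintype.card (H.iterLine j).V : ℤ) =
      (Fintype.card H.V : ℤ) + (j : ℤ) * (cyclomatic H.G - 1) :=
  (my_iterLine_aux H j h).1
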